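/- arXiv:1303.0102 — 4 statements merged into one kernel-verified Lean document; each statement's English description precedes it below -/
import Mathlib

section
/- Let Ω ⊂ ℝ^d be a bounded measurable set of positive Lebesgue measure |Ω|, let N ≥ 1 and ε = N^{-1/d}. Let ψ_η : ℝ^d → ℝ be bounded and measurable, and let Φ : ℝ^d → ℝ be bounded, measurable and compactly supported. Suppose J and Q are functions on ℝ^d vanishing outside Ω that are piecewise constant with respect to a partition of Ω into N pairwise disjoint measurable sets S_1,…,S_N, each of measure |Ω|/N, with values J_j and Q_j on S_j, and suppose |J(y)| ≤ M for all y. Define the error E(x) = |Ω|^{-2} ∫∫ ψ_η(x−R) Φ(ρ) [ J(R+(ε/2)ρ)J(R−(ε/2)ρ) − Q(R+(ε/2)ρ)Q(R−(ε/2)ρ) ] dρ dR. Then for every x, |E(x)| ≤ (sup|ψ_η|)·(sup|Φ|)·( 2M‖𝐉−𝐐‖₁ + ‖𝐉−𝐐‖₁² ), where ‖𝐉−𝐐‖₁ = Σ_{j=1}^N |J_j − Q_j| is the vector 1-norm of the difference of the coefficient vectors. -/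
open MeasureTheory ENNReal

lemma aux_affine {d : ℕ} (F : (Fin d → ℝ) → ℝ≥0∞) (hF : Measurable F)
    (a : Fin d → ℝ) {c : ℝ} (hc : c ≠ 0) :
    ∫⁻ y, F (a + c • y) = ENNReal.ofReal |(c ^ d)⁻¹| * ∫⁻ y, F y := by
  have hG : Measurable (fun z => F (a + z)) := hF.comp (measurable_const_add a)
  have h1 : ∫⁻ y, F (a + c • y) = ∫⁻ z, F (a + z) ∂(Measure.map (c • ·) volume) := by
    rw [lintegral_map hG (measurable_const_smul c)]
  rw [h1, Measure.map_addHaar_smul volume hc, lintegral_smul_measure,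
    Module.finrank_fin_fun, lintegral_add_left_eq_self (fun z => F z) a, smul_eq_mul]

lemma aux_double {d : ℕ} (F G : (Fin d → ℝ) → ℝ≥0∞) (hF : Measurable F)
    (hG : Measurable G) {c : ℝ} (hc : c ≠ 0) :
    ∫⁻ R : Fin d → ℝ, ∫⁻ ρ : Fin d → ℝ, F (R + c • ρ) * G (R - c • ρ) =
      ENNReal.ofReal |((-c) ^ d)⁻¹| * ENNReal.ofReal |((2:ℝ) ^ d)⁻¹| *
        ((∫⁻ y, F y) * (∫⁻ y, G y)) := by
  have hc' : (-c) ≠ 0 := neg_ne_zero.mpr hc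
  have hmeasH : ∀ R : Fin d → ℝ, Measurable (fun v => F (R + R - v) * G v) := fun R =>
    (hF.comp (measurable_id.const_sub (R + R))).mul hG
  have hmeas : Measurable (Function.uncurry fun R v : Fin d → ℝ => F (R + R - v) * G v) :=
    (hF.comp ((measurable_fst.add measurable_fst).sub measurable_snd)).mul
      (hG.comp measurable_snd)
  have step1 : ∀ R : Fin d → ℝ,
      ∫⁻ ρ, F (R + c • ρ) * G (R - c • ρ) =
        ENNReal.ofReal |((-c) ^ d)⁻¹| * ∫⁻ v, F (R + R - v) * G v := by
    intro R
    have h1 : ∀ ρ : Fin d → ℝ, F (R + c • ρ) * G (R - c • ρ) =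
        (fun v => F (R + R - v) * G v) (R + (-c) • ρ) := by
      intro ρ
      have h2 : R + (-c) • ρ = R - c • ρ := by rw [neg_smul]; abel
      have h3 : R + R - (R - c • ρ) = R + c • ρ := by abel
      simp only [h2, h3]
    simp_rw [h1]
    exact aux_affine _ (hmeasH R) R hc'
  simp_rw [step1]
  rw [lintegral_const_mul _ (show Measurable fun R : Fin d → ℝ =>
    ∫⁻ v, F (R + R - v) * G v from hmeas.lintegral_prod_right')]
  have swap : ∫⁻ R : Fin d → ℝ, ∫⁻ v : Fin d → ℝ, F (R + R - v) * G v =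
      ∫⁻ v : Fin d → ℝ, ∫⁻ R : Fin d → ℝ, F (R + R - v) * G v :=
    lintegral_lintegral_swap hmeas.aemeasurable
  rw [swap]
  have inner : ∀ v : Fin d → ℝ, ∫⁻ R : Fin d → ℝ, F (R + R - v) * G v =
      (ENNReal.ofReal |((2:ℝ) ^ d)⁻¹| * ∫⁻ y, F y) * G v := by
    intro v
    rw [lintegral_mul_const _ (show Measurable fun R : Fin d → ℝ => F (R + R - v) from
      hF.comp ((measurable_id.add measurable_id).sub_const v))]
    congr 1
    have h4 : ∀ R : Fin d → ℝ, R + R - v = -v + (2:ℝ) • R := by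
      intro R; rw [two_smul]; abel
    simp_rw [h4]
    exact aux_affine F hF (-v) two_ne_zero
  simp_rw [inner]
  rw [lintegral_const_mul _ hG]
  ring

/-- Main interaction-stress error bound (Section 7.2 of the paper): with
`ε = N^{-1/d}`, a bounded window `ψ_η`, a bounded compactly supported weight `Φ`,
and `J`, `Q` piecewise constant (with values `J_j`, `Q_j`) on a partition of `Ω`
into `N` measurable sets of measure `|Ω|/N`, vanishing outside `Ω` and with
`|J| ≤ M`, the error
`E(x) = |Ω|⁻² ∫∫ ψ_η(x−R) Φ(ρ) [J⁺J⁻ − Q⁺Q⁻] dρ dR` satisfies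
`|E(x)| ≤ (sup|ψ_η|)(sup|Φ|)(2M‖𝐉−𝐐‖₁ + ‖𝐉−𝐐‖₁²)`, where
`‖𝐉−𝐐‖₁ = Σ_j |J_j − Q_j|`. -/
theorem stmt_0 (d N : ℕ) (hd : 0 < d) (hN : 1 ≤ N)
    (Ω : Set (Fin d → ℝ)) (hΩmeas : MeasurableSet Ω)
    (hΩbdd : Bornology.IsBounded Ω) (hΩpos : 0 < (volume Ω).toReal)
    (ε : ℝ) (hε : ε = (N : ℝ) ^ (-(1 : ℝ) / d))
    (ψη : (Fin d → ℝ) → ℝ) (hψmeas : Measurable ψη)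
    (Cψ : ℝ) (hCψ : ∀ x, |ψη x| ≤ Cψ)
    (Φ : (Fin d → ℝ) → ℝ) (hΦmeas : Measurable Φ) (hΦsupp : HasCompactSupport Φ)
    (CΦ : ℝ) (hCΦ : ∀ ρ, |Φ ρ| ≤ CΦ)
    (S : Fin N → Set (Fin d → ℝ))
    (hSmeas : ∀ j, MeasurableSet (S j))
    (hSdisj : ∀ i j, i ≠ j → Disjoint (S i) (S j))
    (hSunion : (⋃ j, S j) = Ω)
    (hSvol : ∀ j, volume (S j) = volume Ω / N)
    (Jc Qc : Fin N → ℝ) (J Q : (Fin d → ℝ) → ℝ)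
    (hJval : ∀ j, ∀ y ∈ S j, J y = Jc j)
    (hQval : ∀ j, ∀ y ∈ S j, Q y = Qc j)
    (hJ0 : ∀ y ∉ Ω, J y = 0) (hQ0 : ∀ y ∉ Ω, Q y = 0)
    (M : ℝ) (hM : ∀ y, |J y| ≤ M) :
    ∀ x : Fin d → ℝ,
      |((volume Ω).toReal ^ 2)⁻¹ *
          ∫ R : Fin d → ℝ, ∫ ρ : Fin d → ℝ,
            ψη (x - R) * Φ ρ *
              (J (R + (ε / 2) • ρ) * J (R - (ε / 2) • ρ) -
                Q (R + (ε / 2) • ρ) * Q (R - (ε / 2) • ρ))| ≤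
        Cψ * CΦ *
          (2 * M * (∑ j, |Jc j - Qc j|) + (∑ j, |Jc j - Qc j|) ^ 2) := by
  intro x
  -- basic positivity facts
  have hM0 : 0 ≤ M := (abs_nonneg _).trans (hM 0)
  have hCψ0 : 0 ≤ Cψ := (abs_nonneg _).trans (hCψ 0)
  have hCΦ0 : 0 ≤ CΦ := (abs_nonneg _).trans (hCΦ 0)
  have hN0 : (0:ℝ) < N := by exact_mod_cast Nat.lt_of_lt_of_le Nat.zero_lt_one hN
  have hε0 : 0 < ε := by rw [hε]; exact Real.rpow_pos_of_pos hN0 _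
  set c : ℝ := ε / 2 with hcdef
  have hc0 : 0 < c := by positivity
  have hc : c ≠ 0 := ne_of_gt hc0
  have hΩfin : volume Ω ≠ ⊤ := hΩbdd.measure_lt_top.ne
  set s : ℝ := ∑ j, |Jc j - Qc j| with hsdef
  have hs0 : 0 ≤ s := Finset.sum_nonneg fun j _ => abs_nonneg _
  set V : ℝ≥0∞ := volume Ω with hVdef
  -- the ENNReal weight functions
  set Dn : (Fin d → ℝ) → ℝ≥0∞ := fun y => ENNReal.ofReal |J y - Q y| with hDndef
  set Fm : (Fin d → ℝ) → ℝ≥0∞ := Ω.indicator (fun _ => ENNReal.ofReal M) with hFmdef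
  have hFmmeas : Measurable Fm := measurable_const.indicator hΩmeas
  have hDrep : Dn =
      fun y => ∑ j, (S j).indicator (fun _ => ENNReal.ofReal |Jc j - Qc j|) y := by
    funext y
    by_cases hy : y ∈ Ω
    · rw [← hSunion] at hy
      obtain ⟨j, hj⟩ := Set.mem_iUnion.mp hy
      rw [Finset.sum_eq_single j]
      · show ENNReal.ofReal |J y - Q y| = _
        rw [Set.indicator_of_mem hj, hJval j y hj, hQval j y hj]
      · intro i _ hij
        exact Set.indicator_of_notMem
          (fun hyi => absurd hj (Set.disjoint_left.mp (hSdisj i j hij) hyi)) _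
      · exact fun h => absurd (Finset.mem_univ j) h
    · have hnot : ∀ j, y ∉ S j := fun j hj => hy (hSunion ▸ Set.mem_iUnion.mpr ⟨j, hj⟩)
      show ENNReal.ofReal |J y - Q y| = _
      rw [hJ0 y hy, hQ0 y hy]
      simp [Set.indicator_of_notMem (hnot _)]
  have hDnmeas : Measurable Dn := by
    rw [hDrep]
    exact Finset.measurable_sum _ fun j _ => measurable_const.indicator (hSmeas j)
  -- the two basic lintegrals
  have hLD : ∫⁻ y, Dn y = ENNReal.ofReal s * (V / N) := by
    rw [hDrep]
    rw [lintegral_finset_sum _ (fun j _ => measurable_const.indicator (hSmeas j))]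
    simp_rw [lintegral_indicator_const (hSmeas _), hSvol, ← Finset.sum_mul]
    rw [hsdef, ENNReal.ofReal_sum_of_nonneg fun j _ => abs_nonneg _]
  have hLM : ∫⁻ y, Fm y = ENNReal.ofReal M * V := by
    rw [hFmdef, lintegral_indicator_const hΩmeas]
  -- the constant from the change of variables
  have hεd : ε ^ d = (N:ℝ)⁻¹ := by
    rw [hε, ← Real.rpow_natCast ((N:ℝ) ^ (-(1:ℝ)/d)) d, ← Real.rpow_mul hN0.le]
    rw [div_mul_cancel₀ _ (by exact_mod_cast hd.ne' : (d:ℝ) ≠ 0)]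
    rw [Real.rpow_neg_one]
  have hk : ENNReal.ofReal |((-c) ^ d)⁻¹| * ENNReal.ofReal |((2:ℝ) ^ d)⁻¹| = (N:ℝ≥0∞) := by
    rw [← ENNReal.ofReal_mul (abs_nonneg _)]
    have h1 : |((-c) ^ d)⁻¹| * |((2:ℝ) ^ d)⁻¹| = (N:ℝ) := by
      rw [abs_inv, abs_inv, abs_pow, abs_pow, abs_neg, abs_of_pos hc0,
        abs_of_pos (by norm_num : (0:ℝ) < 2), ← mul_inv, ← mul_pow]
      have h2 : c * 2 = ε := by rw [hcdef]; ring
      rw [h2, hεd, inv_inv]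
    rw [h1, ENNReal.ofReal_natCast]
  -- pointwise bound
  set Kψ : ℝ≥0∞ := ENNReal.ofReal Cψ with hKψdef
  set KΦ : ℝ≥0∞ := ENNReal.ofReal CΦ with hKΦdef
  have hFm_eq : ∀ y, ENNReal.ofReal (M * Ω.indicator (fun _ => (1:ℝ)) y) = Fm y := by
    intro y
    by_cases hy : y ∈ Ω
    · rw [hFmdef]; simp [Set.indicator_of_mem hy]
    · rw [hFmdef]; simp [Set.indicator_of_notMem hy]
  have hJb : ∀ y, |J y| ≤ M * Ω.indicator (fun _ => (1:ℝ)) y := by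
    intro y
    by_cases hy : y ∈ Ω
    · simpa [Set.indicator_of_mem hy] using hM y
    · simp [Set.indicator_of_notMem hy, hJ0 y hy]
  have hind_nonneg : ∀ y, 0 ≤ Ω.indicator (fun _ => (1:ℝ)) y := fun y =>
    Set.indicator_nonneg (fun _ _ => zero_le_one) y
  have hpt : ∀ R ρ : Fin d → ℝ,
      (‖ψη (x - R) * Φ ρ *
        (J (R + c • ρ) * J (R - c • ρ) - Q (R + c • ρ) * Q (R - c • ρ))‖₊ : ℝ≥0∞) ≤
      Kψ * KΦ * (Fm (R + c • ρ) * Dn (R - c • ρ) + Dn (R + c • ρ) * Fm (R - c • ρ) +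
        Dn (R + c • ρ) * Dn (R - c • ρ)) := by
    intro R ρ
    set u : Fin d → ℝ := R + c • ρ with hudef
    set v : Fin d → ℝ := R - c • ρ with hvdef
    have habs : |J u * J v - Q u * Q v| ≤
        (M * Ω.indicator (fun _ => (1:ℝ)) u) * |J v - Q v| +
          |J u - Q u| * (M * Ω.indicator (fun _ => (1:ℝ)) v) +
          |J u - Q u| * |J v - Q v| := by
      have hid : J u * J v - Q u * Q v =
          J u * (J v - Q v) + (J u - Q u) * J v - (J u - Q u) * (J v - Q v) := by ring
      rw [hid]
      calc |J u * (J v - Q v) + (J u - Q u) * J v - (J u - Q u) * (J v - Q v)|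
          ≤ |J u * (J v - Q v) + (J u - Q u) * J v| + |(J u - Q u) * (J v - Q v)| :=
            abs_sub _ _
        _ ≤ |J u * (J v - Q v)| + |(J u - Q u) * J v| + |(J u - Q u) * (J v - Q v)| :=
            add_le_add_left (abs_add_le _ _) _
        _ ≤ _ := by
            rw [abs_mul, abs_mul, abs_mul]
            exact add_le_add (add_le_add
              (mul_le_mul_of_nonneg_right (hJb u) (abs_nonneg _))
              (mul_le_mul_of_nonneg_left (hJb v) (abs_nonneg _))) le_rfl
    have hreal : ‖ψη (x - R) * Φ ρ * (J u * J v - Q u * Q v)‖ ≤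
        Cψ * CΦ * ((M * Ω.indicator (fun _ => (1:ℝ)) u) * |J v - Q v| +
          |J u - Q u| * (M * Ω.indicator (fun _ => (1:ℝ)) v) +
          |J u - Q u| * |J v - Q v|) := by
      rw [Real.norm_eq_abs, abs_mul, abs_mul]
      exact mul_le_mul (mul_le_mul (hCψ _) (hCΦ _) (abs_nonneg _) hCψ0) habs
        (abs_nonneg _) (by positivity)
    calc (‖ψη (x - R) * Φ ρ * (J u * J v - Q u * Q v)‖₊ : ℝ≥0∞)
        = ENNReal.ofReal ‖ψη (x - R) * Φ ρ * (J u * J v - Q u * Q v)‖ :=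
          (ofReal_norm _).symm
      _ ≤ ENNReal.ofReal (Cψ * CΦ *
          ((M * Ω.indicator (fun _ => (1:ℝ)) u) * |J v - Q v| +
            |J u - Q u| * (M * Ω.indicator (fun _ => (1:ℝ)) v) +
            |J u - Q u| * |J v - Q v|)) := ENNReal.ofReal_le_ofReal hreal
      _ = Kψ * KΦ * (Fm u * Dn v + Dn u * Fm v + Dn u * Dn v) := by
          rw [ENNReal.ofReal_mul (mul_nonneg hCψ0 hCΦ0), ENNReal.ofReal_mul hCψ0,
            ENNReal.ofReal_add (add_nonneg
              (mul_nonneg (mul_nonneg hM0 (hind_nonneg u)) (abs_nonneg _))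
              (mul_nonneg (abs_nonneg _) (mul_nonneg hM0 (hind_nonneg v))))
              (mul_nonneg (abs_nonneg _) (abs_nonneg _)),
            ENNReal.ofReal_add
              (mul_nonneg (mul_nonneg hM0 (hind_nonneg u)) (abs_nonneg _))
              (mul_nonneg (abs_nonneg _) (mul_nonneg hM0 (hind_nonneg v))),
            ENNReal.ofReal_mul (mul_nonneg hM0 (hind_nonneg u)),
            ENNReal.ofReal_mul (abs_nonneg (J u - Q u)),
            ENNReal.ofReal_mul (abs_nonneg (J u - Q u)),
            hFm_eq u, hFm_eq v]
  -- measurability of the pieces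
  have hmadd : ∀ R : Fin d → ℝ, Measurable fun ρ : Fin d → ℝ => R + c • ρ := fun R =>
    (measurable_id.const_smul c).const_add R
  have hmsub : ∀ R : Fin d → ℝ, Measurable fun ρ : Fin d → ℝ => R - c • ρ := fun R =>
    (measurable_id.const_smul c).const_sub R
  have hA : Measurable fun p : (Fin d → ℝ) × (Fin d → ℝ) => p.1 + c • p.2 :=
    measurable_fst.add (measurable_snd.const_smul c)
  have hB : Measurable fun p : (Fin d → ℝ) × (Fin d → ℝ) => p.1 - c • p.2 :=
    measurable_fst.sub (measurable_snd.const_smul c)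
  have hm1 : ∀ R, Measurable fun ρ => Fm (R + c • ρ) * Dn (R - c • ρ) := fun R =>
    (hFmmeas.comp (hmadd R)).mul (hDnmeas.comp (hmsub R))
  have hm2 : ∀ R, Measurable fun ρ => Dn (R + c • ρ) * Fm (R - c • ρ) := fun R =>
    (hDnmeas.comp (hmadd R)).mul (hFmmeas.comp (hmsub R))
  have hm3 : ∀ R, Measurable fun ρ => Dn (R + c • ρ) * Dn (R - c • ρ) := fun R =>
    (hDnmeas.comp (hmadd R)).mul (hDnmeas.comp (hmsub R))
  have hU1 : Measurable (Function.uncurry fun R ρ : Fin d → ℝ =>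
      Fm (R + c • ρ) * Dn (R - c • ρ)) := (hFmmeas.comp hA).mul (hDnmeas.comp hB)
  have hU2 : Measurable (Function.uncurry fun R ρ : Fin d → ℝ =>
      Dn (R + c • ρ) * Fm (R - c • ρ)) := (hDnmeas.comp hA).mul (hFmmeas.comp hB)
  have hU3 : Measurable (Function.uncurry fun R ρ : Fin d → ℝ =>
      Dn (R + c • ρ) * Dn (R - c • ρ)) := (hDnmeas.comp hA).mul (hDnmeas.comp hB)
  have hI1m : Measurable fun R : Fin d → ℝ => ∫⁻ ρ, Fm (R + c • ρ) * Dn (R - c • ρ) :=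
    hU1.lintegral_prod_right'
  have hI2m : Measurable fun R : Fin d → ℝ => ∫⁻ ρ, Dn (R + c • ρ) * Fm (R - c • ρ) :=
    hU2.lintegral_prod_right'
  have hI3m : Measurable fun R : Fin d → ℝ => ∫⁻ ρ, Dn (R + c • ρ) * Dn (R - c • ρ) :=
    hU3.lintegral_prod_right'
  -- ENNReal algebra helpers
  have hn0 : ((N:ℝ≥0∞)) ≠ 0 := Nat.cast_ne_zero.mpr (by omega)
  have hnt : ((N:ℝ≥0∞)) ≠ ⊤ := ENNReal.natCast_ne_top N
  have hdiv : (N:ℝ≥0∞) * (V / N) = V := by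
    rw [ENNReal.div_eq_inv_mul, ← mul_assoc, ENNReal.mul_inv_cancel hn0 hnt, one_mul]
  have hdivle : V / (N:ℝ≥0∞) ≤ V := by
    rw [ENNReal.div_eq_inv_mul]
    calc ((N:ℝ≥0∞))⁻¹ * V ≤ 1 * V :=
      mul_le_mul_left (ENNReal.inv_le_one.mpr (Nat.one_le_cast.mpr hN)) V
    _ = V := one_mul V
  -- the target bound in ℝ≥0∞
  set Bd : ℝ≥0∞ := ENNReal.ofReal (Cψ * CΦ * (2 * M * s + s ^ 2)) * V ^ 2 with hBddef
  have hBdfin : Bd ≠ ⊤ := ENNReal.mul_ne_top ENNReal.ofReal_ne_top (ENNReal.pow_ne_top hΩfin)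
  have hTot : (∫⁻ R : Fin d → ℝ, ∫⁻ ρ : Fin d → ℝ, (‖ψη (x - R) * Φ ρ *
        (J (R + c • ρ) * J (R - c • ρ) - Q (R + c • ρ) * Q (R - c • ρ))‖₊ : ℝ≥0∞)) ≤ Bd := by
    have inner_eq : ∀ R : Fin d → ℝ,
        ∫⁻ ρ, Kψ * KΦ * (Fm (R + c • ρ) * Dn (R - c • ρ) + Dn (R + c • ρ) * Fm (R - c • ρ) +
          Dn (R + c • ρ) * Dn (R - c • ρ)) =
        Kψ * KΦ * ((∫⁻ ρ, Fm (R + c • ρ) * Dn (R - c • ρ)) +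
          (∫⁻ ρ, Dn (R + c • ρ) * Fm (R - c • ρ)) +
          (∫⁻ ρ, Dn (R + c • ρ) * Dn (R - c • ρ))) := by
      intro R
      rw [lintegral_const_mul _ (((hm1 R).fun_add (hm2 R)).fun_add (hm3 R)),
        lintegral_add_left ((hm1 R).fun_add (hm2 R)), lintegral_add_left (hm1 R)]
    calc (∫⁻ R : Fin d → ℝ, ∫⁻ ρ : Fin d → ℝ, (‖ψη (x - R) * Φ ρ *
          (J (R + c • ρ) * J (R - c • ρ) - Q (R + c • ρ) * Q (R - c • ρ))‖₊ : ℝ≥0∞))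
        ≤ ∫⁻ R : Fin d → ℝ, ∫⁻ ρ : Fin d → ℝ, Kψ * KΦ *
            (Fm (R + c • ρ) * Dn (R - c • ρ) + Dn (R + c • ρ) * Fm (R - c • ρ) +
              Dn (R + c • ρ) * Dn (R - c • ρ)) :=
          lintegral_mono fun R => lintegral_mono fun ρ => hpt R ρ
      _ = Kψ * KΦ *
            ((∫⁻ R : Fin d → ℝ, ∫⁻ ρ, Fm (R + c • ρ) * Dn (R - c • ρ)) +
             (∫⁻ R : Fin d → ℝ, ∫⁻ ρ, Dn (R + c • ρ) * Fm (R - c • ρ)) +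
             (∫⁻ R : Fin d → ℝ, ∫⁻ ρ, Dn (R + c • ρ) * Dn (R - c • ρ))) := by
          simp_rw [inner_eq]
          rw [lintegral_const_mul _ ((hI1m.fun_add hI2m).fun_add hI3m),
            lintegral_add_left (hI1m.fun_add hI2m), lintegral_add_left hI1m]
      _ = Kψ * KΦ *
            ((N:ℝ≥0∞) * ((ENNReal.ofReal M * V) * (ENNReal.ofReal s * (V / N))) +
             (N:ℝ≥0∞) * ((ENNReal.ofReal s * (V / N)) * (ENNReal.ofReal M * V)) +
             (N:ℝ≥0∞) * ((ENNReal.ofReal s * (V / N)) * (ENNReal.ofReal s * (V / N)))) := by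
          rw [aux_double Fm Dn hFmmeas hDnmeas hc, aux_double Dn Fm hDnmeas hFmmeas hc,
            aux_double Dn Dn hDnmeas hDnmeas hc, hk, hLD, hLM]
      _ = Kψ * KΦ *
            ((ENNReal.ofReal M * ENNReal.ofReal s) * (V * V) +
             (ENNReal.ofReal s * ENNReal.ofReal M) * (V * V) +
             (ENNReal.ofReal s * ENNReal.ofReal s) * ((V / N) * V)) := by
          have e1 : (N:ℝ≥0∞) * ((ENNReal.ofReal M * V) * (ENNReal.ofReal s * (V / N))) =
              (ENNReal.ofReal M * ENNReal.ofReal s) * (V * V) := by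
            calc (N:ℝ≥0∞) * ((ENNReal.ofReal M * V) * (ENNReal.ofReal s * (V / N)))
                = (ENNReal.ofReal M * ENNReal.ofReal s) * (V * ((N:ℝ≥0∞) * (V / N))) := by
                  ring
              _ = _ := by rw [hdiv]
          have e2 : (N:ℝ≥0∞) * ((ENNReal.ofReal s * (V / N)) * (ENNReal.ofReal M * V)) =
              (ENNReal.ofReal s * ENNReal.ofReal M) * (V * V) := by
            calc (N:ℝ≥0∞) * ((ENNReal.ofReal s * (V / N)) * (ENNReal.ofReal M * V))
                = (ENNReal.ofReal s * ENNReal.ofReal M) * (V * ((N:ℝ≥0∞) * (V / N))) := by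
                  ring
              _ = _ := by rw [hdiv]
          have e3 : (N:ℝ≥0∞) * ((ENNReal.ofReal s * (V / N)) * (ENNReal.ofReal s * (V / N))) =
              (ENNReal.ofReal s * ENNReal.ofReal s) * ((V / N) * V) := by
            calc (N:ℝ≥0∞) * ((ENNReal.ofReal s * (V / N)) * (ENNReal.ofReal s * (V / N)))
                = (ENNReal.ofReal s * ENNReal.ofReal s) * ((V / N) * ((N:ℝ≥0∞) * (V / N))) := by
                  ring
              _ = _ := by rw [hdiv]
          rw [e1, e2, e3]
      _ ≤ Kψ * KΦ *
            ((ENNReal.ofReal M * ENNReal.ofReal s) * (V * V) +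
             (ENNReal.ofReal s * ENNReal.ofReal M) * (V * V) +
             (ENNReal.ofReal s * ENNReal.ofReal s) * (V * V)) := by
          gcongr
      _ = Bd := by
          rw [hBddef, ENNReal.ofReal_mul (mul_nonneg hCψ0 hCΦ0), ENNReal.ofReal_mul hCψ0,
            ENNReal.ofReal_add (by positivity) (by positivity),
            ENNReal.ofReal_mul (by positivity : (0:ℝ) ≤ 2 * M),
            ENNReal.ofReal_mul (by norm_num : (0:ℝ) ≤ 2),
            ENNReal.ofReal_pow hs0, ENNReal.ofReal_ofNat]
          ring
  -- from ℝ≥0∞ back to ℝ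
  have hnorm : ‖∫ R : Fin d → ℝ, ∫ ρ : Fin d → ℝ, ψη (x - R) * Φ ρ *
      (J (R + c • ρ) * J (R - c • ρ) - Q (R + c • ρ) * Q (R - c • ρ))‖ ≤ Bd.toReal := by
    have h1 : (‖∫ R : Fin d → ℝ, ∫ ρ : Fin d → ℝ, ψη (x - R) * Φ ρ *
        (J (R + c • ρ) * J (R - c • ρ) - Q (R + c • ρ) * Q (R - c • ρ))‖₊ : ℝ≥0∞) ≤ Bd :=
      le_trans (enorm_integral_le_lintegral_enorm _)
        (le_trans (lintegral_mono fun R => enorm_integral_le_lintegral_enorm _) hTot)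
    have h2 := ENNReal.toReal_mono hBdfin h1
    simpa using h2
  have hBdtoReal : Bd.toReal = Cψ * CΦ * (2 * M * s + s ^ 2) * V.toReal ^ 2 := by
    rw [hBddef, ENNReal.toReal_mul, ENNReal.toReal_pow,
      ENNReal.toReal_ofReal (by positivity)]
  rw [abs_mul, abs_of_nonneg (inv_nonneg.mpr (by positivity : (0:ℝ) ≤ V.toReal ^ 2))]
  calc (V.toReal ^ 2)⁻¹ * |∫ R : Fin d → ℝ, ∫ ρ : Fin d → ℝ, ψη (x - R) * Φ ρ *
        (J (R + c • ρ) * J (R - c • ρ) - Q (R + c • ρ) * Q (R - c • ρ))|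
      ≤ (V.toReal ^ 2)⁻¹ * (Cψ * CΦ * (2 * M * s + s ^ 2) * V.toReal ^ 2) := by
        apply mul_le_mul_of_nonneg_left _ (inv_nonneg.mpr (by positivity))
        rw [← Real.norm_eq_abs, ← hBdtoReal]
        exact hnorm
    _ = Cψ * CΦ * (2 * M * s + s ^ 2) := by
        field_simp
end

section
/- Let A be a real B×N matrix of rank r with singular values σ₁ ≥ … ≥ σ_r in (0,1] and orthonormal singular vectors ξ_j ∈ ℝ^B, ξ̂_j ∈ ℝ^N. Let f : [0,∞) → (0,1] be continuous, strictly decreasing, with f(0)=1, f(j)=σ_j, f(t)→0. Let φ : (0,1]×(0,∞) → ℝ with s ↦ |1−φ(s,α)| and s ↦ |φ(s,α)|/s both nonincreasing on (0,1] for the given α > 0, and let p ∈ [1,∞). Let b = Σ_j b_j ξ_j, b^δ = Σ_j b_j^δ ξ_j, x = Σ_j (b_j/σ_j) ξ̂_j, x^{α,δ} = Σ_j b_j^δ (φ(σ_j,α)/σ_j) ξ̂_j. Then there is a constant C₁ depending only on p and the singular vectors such that ‖x − x^{α,δ}‖_p ≤ C₁ ‖x‖_∞ ( ∫_0^{r+1}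 |1−φ(f(t),α)|^p dt )^{1/p} + C₁ ‖b − b^δ‖_∞ ( ∫_0^{r+1} (|φ(f(t),α)|/f(t))^p dt )^{1/p}. -/
open Matrix

private lemma aux_int (f g : ℝ → ℝ) (p R : ℝ) (hp : 0 ≤ p)
    (hfanti : AntitoneOn f (Set.Ici 0))
    (hfmem : ∀ t : ℝ, 0 ≤ t → f t ∈ Set.Ioc (0 : ℝ) 1)
    (hg : AntitoneOn g (Set.Ioc (0 : ℝ) 1))
    (hgnn : ∀ s ∈ Set.Ioc (0 : ℝ) 1, 0 ≤ g s)
    (a : ℝ) (ha0 : 0 ≤ a) (haR : a + 1 ≤ R) :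
    g (f a) ^ p ≤ ∫ t in (0 : ℝ)..R, g (f t) ^ p := by
  set G : ℝ → ℝ := fun t => g (f t) ^ p with hG
  have hR0 : (0 : ℝ) ≤ R := by linarith
  have hmono : MonotoneOn G (Set.Icc 0 R) := by
    intro s hs t ht hst
    have hfs := hfmem s hs.1
    have hft := hfmem t ht.1
    have hle : f t ≤ f s := hfanti hs.1 ht.1 hst
    exact Real.rpow_le_rpow (hgnn _ hfs) (hg hft hfs hle) hp
  have hGnn : ∀ t ∈ Set.Icc (0 : ℝ) R, 0 ≤ G t := fun t ht =>
    Real.rpow_nonneg (hgnn _ (hfmem t ht.1)) p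
  have hInt : IntervalIntegrable G MeasureTheory.volume 0 R := by
    apply MonotoneOn.intervalIntegrable
    rwa [Set.uIcc_of_le hR0]
  have hsub : ∀ c d : ℝ, 0 ≤ c → c ≤ d → d ≤ R →
      IntervalIntegrable G MeasureTheory.volume c d := by
    intro c d hc hcd hdR
    refine hInt.mono_set ?_
    rw [Set.uIcc_of_le hcd, Set.uIcc_of_le hR0]
    exact Set.Icc_subset_Icc hc hdR
  have i1 := hsub 0 a le_rfl ha0 (by linarith)
  have i2 := hsub a (a + 1) ha0 (by linarith) haR
  have i3 := hsub (a + 1) R (by linarith) haR le_rfl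
  have i4 := hsub a R ha0 (by linarith) le_rfl
  have e1 : (∫ t in (0 : ℝ)..a, G t) + ∫ t in a..R, G t = ∫ t in (0 : ℝ)..R, G t :=
    intervalIntegral.integral_add_adjacent_intervals i1 i4
  have e2 : (∫ t in a..(a + 1), G t) + ∫ t in (a + 1)..R, G t = ∫ t in a..R, G t :=
    intervalIntegral.integral_add_adjacent_intervals i2 i3
  have n1 : 0 ≤ ∫ t in (0 : ℝ)..a, G t :=
    intervalIntegral.integral_nonneg ha0 (fun t ht => hGnn t ⟨ht.1, le_trans ht.2 (by linarith)⟩)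
  have n3 : 0 ≤ ∫ t in (a + 1)..R, G t :=
    intervalIntegral.integral_nonneg haR
      (fun t ht => hGnn t ⟨le_trans (by linarith) ht.1, ht.2⟩)
  have key : G a ≤ ∫ t in a..(a + 1), G t := by
    have h := intervalIntegral.integral_mono_on (by linarith : a ≤ a + 1)
      (intervalIntegrable_const (c := G a)) i2
      (fun t ht => hmono ⟨ha0, by linarith⟩ ⟨le_trans ha0 ht.1, le_trans ht.2 haR⟩ ht.1)
    simpa using h
  linarith

/-- Combined error estimate for filtered regularization: there is a constant `C₁`
depending only on `p` and the singular vectors such that, for every admissible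
interpolant `f` of the singular values, every filter `φ` with `|1−φ(·,α)|` and
`|φ(·,α)|/·` nonincreasing, and all data `b`, `b^δ`,
`‖x − x^{α,δ}‖_p ≤ C₁‖x‖_∞ (∫_0^{r+1}|1−φ(f(t),α)|^p dt)^{1/p}
 + C₁‖b − b^δ‖_∞ (∫_0^{r+1}(|φ(f(t),α)|/f(t))^p dt)^{1/p}`. -/
theorem stmt_13 {B N r : ℕ} (A : Matrix (Fin B) (Fin N) ℝ) (hrank : A.rank = r)
    (σ : Fin r → ℝ) (hσ : ∀ j, σ j ∈ Set.Ioc (0 : ℝ) 1)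
    (hσord : ∀ i j : Fin r, i ≤ j → σ j ≤ σ i)
    (ξ : Fin r → Fin B → ℝ) (ξhat : Fin r → Fin N → ℝ)
    (hξ : ∀ i j, ξ i ⬝ᵥ ξ j = if i = j then 1 else 0)
    (hξhat : ∀ i j, ξhat i ⬝ᵥ ξhat j = if i = j then 1 else 0)
    (hA : ∀ j, A.mulVec (ξhat j) = σ j • ξ j)
    (hAT : ∀ j, A.transpose.mulVec (ξ j) = σ j • ξhat j)
    (p : ℝ) (hp : 1 ≤ p) :
    ∃ C₁ : ℝ, ∀ f : ℝ → ℝ,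
      ContinuousOn f (Set.Ici 0) → StrictAntiOn f (Set.Ici 0) →
      (∀ t : ℝ, 0 ≤ t → f t ∈ Set.Ioc (0 : ℝ) 1) → f 0 = 1 →
      (∀ j : Fin r, f ((j : ℕ) + 1) = σ j) →
      Filter.Tendsto f Filter.atTop (nhds 0) →
      ∀ (φ : ℝ → ℝ → ℝ) (α : ℝ), 0 < α →
      AntitoneOn (fun s => |1 - φ s α|) (Set.Ioc (0 : ℝ) 1) →
      AntitoneOn (fun s => |φ s α| / s) (Set.Ioc (0 : ℝ) 1) →
      ∀ bc bδ : Fin r → ℝ,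
      (∑ i, |(∑ j, (bc j / σ j) • ξhat j) i -
          (∑ j, (bδ j * φ (σ j) α / σ j) • ξhat j) i| ^ p) ^ (1 / p) ≤
        C₁ * (⨆ i, |(∑ j, (bc j / σ j) • ξhat j) i|) *
            (∫ t in (0 : ℝ)..(r + 1), |1 - φ (f t) α| ^ p) ^ (1 / p) +
          C₁ * (⨆ i, |(∑ j, (bc j - bδ j) • ξ j) i|) *
            (∫ t in (0 : ℝ)..(r + 1), (|φ (f t) α| / f t) ^ p) ^ (1 / p) := by
  classical
  have hp0 : (0 : ℝ) < p := lt_of_lt_of_le one_pos hp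
  have hpp : p * (1 / p) = 1 := by field_simp
  set K₁ : ℝ := 1 + ∑ j, ∑ i, |ξhat j i| with hK₁def
  set K₂ : ℝ := 1 + ∑ j, ∑ i, |ξ j i| with hK₂def
  have hK₁ : (1 : ℝ) ≤ K₁ := le_add_of_nonneg_right (by positivity)
  have hK₂ : (1 : ℝ) ≤ K₂ := le_add_of_nonneg_right (by positivity)
  refine ⟨((N : ℝ) + 1) * K₁ * (K₁ + K₂) * r, ?_⟩
  intro f hfc hfanti hfmem hf0 hfσ hftop φ α hα hφ1 hφ2 bc bδ
  have hσpos : ∀ j, 0 < σ j := fun j => (hσ j).1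
  set x : Fin N → ℝ := ∑ j, (bc j / σ j) • ξhat j with hxdef
  set xα : Fin N → ℝ := ∑ j, (bδ j * φ (σ j) α / σ j) • ξhat j with hxαdef
  set y : Fin B → ℝ := ∑ j, (bc j - bδ j) • ξ j with hydef
  set X : ℝ := ⨆ i, |x i| with hXdef
  set D : ℝ := ⨆ i, |y i| with hDdef
  set J₁ : ℝ := (∫ t in (0 : ℝ)..(r + 1), |1 - φ (f t) α| ^ p) ^ (1 / p) with hJ₁def
  set J₂ : ℝ := (∫ t in (0 : ℝ)..(r + 1), (|φ (f t) α| / f t) ^ p) ^ (1 / p) with hJ₂def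
  have hXnn : 0 ≤ X := Real.iSup_nonneg fun i => abs_nonneg _
  have hDnn : 0 ≤ D := Real.iSup_nonneg fun i => abs_nonneg _
  have hxle : ∀ i, |x i| ≤ X := by
    intro i; rw [hXdef]
    exact le_ciSup (Set.Finite.bddAbove (Set.finite_range fun i => |x i|)) i
  have hyle : ∀ i, |y i| ≤ D := by
    intro i; rw [hDdef]
    exact le_ciSup (Set.Finite.bddAbove (Set.finite_range fun i => |y i|)) i
  have hrnn : (0 : ℝ) ≤ (r : ℝ) + 1 := by positivity
  have hI₁nn : 0 ≤ ∫ t in (0 : ℝ)..(r + 1), |1 - φ (f t) α| ^ p :=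
    intervalIntegral.integral_nonneg hrnn (fun t _ => Real.rpow_nonneg (abs_nonneg _) p)
  have hI₂nn : 0 ≤ ∫ t in (0 : ℝ)..(r + 1), (|φ (f t) α| / f t) ^ p :=
    intervalIntegral.integral_nonneg hrnn (fun t ht =>
      Real.rpow_nonneg (div_nonneg (abs_nonneg _) (hfmem t ht.1).1.le) p)
  have hJ₁nn : 0 ≤ J₁ := Real.rpow_nonneg hI₁nn _
  have hJ₂nn : 0 ≤ J₂ := Real.rpow_nonneg hI₂nn _
  -- entry sums
  have hξhat_sum : ∀ j, (∑ i, |ξhat j i|) ≤ K₁ := by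
    intro j
    have h : (∑ i, |ξhat j i|) ≤ ∑ k, ∑ i, |ξhat k i| :=
      Finset.single_le_sum (f := fun k => ∑ i, |ξhat k i|)
        (fun k _ => Finset.sum_nonneg fun i _ => abs_nonneg _) (Finset.mem_univ j)
    rw [hK₁def]; linarith
  have hξ_sum : ∀ j, (∑ i, |ξ j i|) ≤ K₂ := by
    intro j
    have h : (∑ i, |ξ j i|) ≤ ∑ k, ∑ i, |ξ k i| :=
      Finset.single_le_sum (f := fun k => ∑ i, |ξ k i|)
        (fun k _ => Finset.sum_nonneg fun i _ => abs_nonneg _) (Finset.mem_univ j)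
    rw [hK₂def]; linarith
  have hentry : ∀ j i, |ξhat j i| ≤ K₁ := by
    intro j i
    refine le_trans ?_ (hξhat_sum j)
    exact Finset.single_le_sum (f := fun i => |ξhat j i|)
      (fun k _ => abs_nonneg _) (Finset.mem_univ i)
  -- coefficient recovery
  have hxapp : ∀ i, x i = ∑ k, (bc k / σ k) * ξhat k i := by
    intro i; rw [hxdef]; simp
  have hyapp : ∀ i, y i = ∑ k, (bc k - bδ k) * ξ k i := by
    intro i; rw [hydef]; simp
  have hxcoef : ∀ j, (∑ i, x i * ξhat j i) = bc j / σ j := by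
    intro j
    have h1 : (∑ i, x i * ξhat j i)
        = ∑ k, (bc k / σ k) * (∑ i, ξhat k i * ξhat j i) := by
      simp only [hxapp, Finset.sum_mul]
      rw [Finset.sum_comm]
      simp [Finset.mul_sum, mul_assoc]
    have hd : ∀ k, (∑ i, ξhat k i * ξhat j i) = if k = j then 1 else 0 := by
      intro k; simpa [dotProduct] using hξhat k j
    rw [h1]
    simp [hd]
  have hycoef : ∀ j, (∑ i, y i * ξ j i) = bc j - bδ j := by
    intro j
    have h1 : (∑ i, y i * ξ j i)
        = ∑ k, (bc k - bδ k) * (∑ i, ξ k i * ξ j i) := by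
      simp only [hyapp, Finset.sum_mul]
      rw [Finset.sum_comm]
      simp [Finset.mul_sum, mul_assoc]
    have hd : ∀ k, (∑ i, ξ k i * ξ j i) = if k = j then 1 else 0 := by
      intro k; simpa [dotProduct] using hξ k j
    rw [h1]
    simp [hd]
  have hbc_bound : ∀ j, |bc j / σ j| ≤ K₁ * X := by
    intro j
    rw [← hxcoef j]
    calc |∑ i, x i * ξhat j i| ≤ ∑ i, |x i * ξhat j i| := Finset.abs_sum_le_sum_abs _ _
      _ ≤ ∑ i, X * |ξhat j i| := by
          refine Finset.sum_le_sum fun i _ => ?_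
          rw [abs_mul]
          exact mul_le_mul_of_nonneg_right (hxle i) (abs_nonneg _)
      _ = X * ∑ i, |ξhat j i| := by rw [Finset.mul_sum]
      _ ≤ X * K₁ := mul_le_mul_of_nonneg_left (hξhat_sum j) hXnn
      _ = K₁ * X := mul_comm _ _
  have hbd_bound : ∀ j, |bc j - bδ j| ≤ K₂ * D := by
    intro j
    rw [← hycoef j]
    calc |∑ i, y i * ξ j i| ≤ ∑ i, |y i * ξ j i| := Finset.abs_sum_le_sum_abs _ _
      _ ≤ ∑ i, D * |ξ j i| := by
          refine Finset.sum_le_sum fun i _ => ?_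
          rw [abs_mul]
          exact mul_le_mul_of_nonneg_right (hyle i) (abs_nonneg _)
      _ = D * ∑ i, |ξ j i| := by rw [Finset.mul_sum]
      _ ≤ D * K₂ := mul_le_mul_of_nonneg_left (hξ_sum j) hDnn
      _ = K₂ * D := mul_comm _ _
  -- per-index filter bounds via the integral
  have hfanti' : AntitoneOn f (Set.Ici 0) := hfanti.antitoneOn
  have hu_le : ∀ j : Fin r, |1 - φ (σ j) α| ≤ J₁ := by
    intro j
    have ha0 : (0 : ℝ) ≤ ((j : ℕ) : ℝ) + 1 := by positivity
    have haR : ((j : ℕ) : ℝ) + 1 + 1 ≤ (r : ℝ) + 1 := by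
      have h : ((j : ℕ) : ℝ) + 1 ≤ (r : ℝ) := by exact_mod_cast (Fin.is_lt j)
      linarith
    have hint := aux_int f (fun s => |1 - φ s α|) p ((r : ℝ) + 1) hp0.le hfanti' hfmem
      hφ1 (fun s _ => abs_nonneg _) (((j : ℕ) : ℝ) + 1) ha0 haR
    rw [hfσ j] at hint
    calc |1 - φ (σ j) α| = (|1 - φ (σ j) α| ^ p) ^ (1 / p) := by
          rw [← Real.rpow_mul (abs_nonneg _), hpp, Real.rpow_one]
      _ ≤ J₁ := Real.rpow_le_rpow (Real.rpow_nonneg (abs_nonneg _) p) hint (by positivity)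
  have hw_le : ∀ j : Fin r, |φ (σ j) α| / σ j ≤ J₂ := by
    intro j
    have ha0 : (0 : ℝ) ≤ ((j : ℕ) : ℝ) + 1 := by positivity
    have haR : ((j : ℕ) : ℝ) + 1 + 1 ≤ (r : ℝ) + 1 := by
      have h : ((j : ℕ) : ℝ) + 1 ≤ (r : ℝ) := by exact_mod_cast (Fin.is_lt j)
      linarith
    have hint := aux_int f (fun s => |φ s α| / s) p ((r : ℝ) + 1) hp0.le hfanti' hfmem
      hφ2 (fun s hs => div_nonneg (abs_nonneg _) hs.1.le) (((j : ℕ) : ℝ) + 1) ha0 haR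
    rw [hfσ j] at hint
    have hwnn : 0 ≤ |φ (σ j) α| / σ j := div_nonneg (abs_nonneg _) (hσpos j).le
    calc |φ (σ j) α| / σ j = ((|φ (σ j) α| / σ j) ^ p) ^ (1 / p) := by
          rw [← Real.rpow_mul hwnn, hpp, Real.rpow_one]
      _ ≤ J₂ := Real.rpow_le_rpow (Real.rpow_nonneg hwnn p) hint (by positivity)
  -- the difference vector
  set c : Fin r → ℝ := fun j => bc j / σ j - bδ j * φ (σ j) α / σ j with hcdef
  have hv : ∀ i, x i - xα i = ∑ j, c j * ξhat j i := by
    intro i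
    rw [hxdef, hxαdef]
    simp [hcdef, sub_mul, Finset.sum_sub_distrib]
  set S : ℝ := ∑ j, |c j| with hSdef
  have hSnn : 0 ≤ S := Finset.sum_nonneg fun j _ => abs_nonneg _
  have hvle : ∀ i, |x i - xα i| ≤ K₁ * S := by
    intro i
    rw [hv i]
    calc |∑ j, c j * ξhat j i| ≤ ∑ j, |c j * ξhat j i| := Finset.abs_sum_le_sum_abs _ _
      _ ≤ ∑ j, |c j| * K₁ := by
          refine Finset.sum_le_sum fun j _ => ?_
          rw [abs_mul]
          exact mul_le_mul_of_nonneg_left (hentry j i) (abs_nonneg _)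
      _ = S * K₁ := by rw [hSdef, Finset.sum_mul]
      _ = K₁ * S := mul_comm _ _
  have hKS : 0 ≤ K₁ * S := mul_nonneg (by linarith) hSnn
  -- lhs bound
  have hN : (N : ℝ) ^ (1 / p) ≤ (N : ℝ) + 1 := by
    have h1 : (N : ℝ) ^ (1 / p) ≤ ((N : ℝ) + 1) ^ (1 / p) :=
      Real.rpow_le_rpow (Nat.cast_nonneg N) (by linarith) (by positivity)
    have h2 : ((N : ℝ) + 1) ^ (1 / p) ≤ ((N : ℝ) + 1) ^ (1 : ℝ) := by
      refine Real.rpow_le_rpow_of_exponent_le (le_add_of_nonneg_left (Nat.cast_nonneg N)) ?_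
      rw [div_le_one hp0]; exact hp
    rw [Real.rpow_one] at h2
    exact h1.trans h2
  have hLHS : (∑ i, |x i - xα i| ^ p) ^ (1 / p) ≤ ((N : ℝ) + 1) * (K₁ * S) := by
    have h1 : (∑ i, |x i - xα i| ^ p) ≤ (N : ℝ) * (K₁ * S) ^ p := by
      calc ∑ i, |x i - xα i| ^ p ≤ ∑ _i : Fin N, (K₁ * S) ^ p :=
            Finset.sum_le_sum fun i _ => Real.rpow_le_rpow (abs_nonneg _) (hvle i) hp0.le
        _ = (N : ℝ) * (K₁ * S) ^ p := by
            simp [Finset.sum_const, nsmul_eq_mul]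
    calc (∑ i, |x i - xα i| ^ p) ^ (1 / p)
        ≤ ((N : ℝ) * (K₁ * S) ^ p) ^ (1 / p) :=
          Real.rpow_le_rpow
            (Finset.sum_nonneg fun i _ => Real.rpow_nonneg (abs_nonneg _) p) h1 (by positivity)
      _ = (N : ℝ) ^ (1 / p) * ((K₁ * S) ^ p) ^ (1 / p) :=
          Real.mul_rpow (Nat.cast_nonneg N) (Real.rpow_nonneg hKS p)
      _ = (N : ℝ) ^ (1 / p) * (K₁ * S) := by
          rw [← Real.rpow_mul hKS, hpp, Real.rpow_one]
      _ ≤ ((N : ℝ) + 1) * (K₁ * S) := mul_le_mul_of_nonneg_right hN hKS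
  -- bound on S
  have hS : S ≤ K₁ * X * ((r : ℝ) * J₁) + K₂ * D * ((r : ℝ) * J₂) := by
    have hterm : ∀ j, |c j| ≤ K₁ * X * J₁ + K₂ * D * J₂ := by
      intro j
      have hid : c j = (bc j / σ j) * (1 - φ (σ j) α) + (bc j - bδ j) * (φ (σ j) α / σ j) := by
        rw [hcdef]; ring
      rw [hid]
      calc |(bc j / σ j) * (1 - φ (σ j) α) + (bc j - bδ j) * (φ (σ j) α / σ j)|
          ≤ |(bc j / σ j) * (1 - φ (σ j) α)| + |(bc j - bδ j) * (φ (σ j) α / σ j)| :=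
            abs_add_le _ _
        _ = |bc j / σ j| * |1 - φ (σ j) α| + |bc j - bδ j| * (|φ (σ j) α| / σ j) := by
            have h2 : |φ (σ j) α / σ j| = |φ (σ j) α| / σ j := by
              rw [abs_div, abs_of_pos (hσpos j)]
            rw [abs_mul, abs_mul, h2]
        _ ≤ K₁ * X * J₁ + K₂ * D * J₂ :=
            add_le_add
              (mul_le_mul (hbc_bound j) (hu_le j) (abs_nonneg _)
                (mul_nonneg (by linarith) hXnn))
              (mul_le_mul (hbd_bound j) (hw_le j)
                (div_nonneg (abs_nonneg _) (hσpos j).le)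
                (mul_nonneg (by linarith) hDnn))
    calc S ≤ ∑ _j : Fin r, (K₁ * X * J₁ + K₂ * D * J₂) :=
          Finset.sum_le_sum fun j _ => hterm j
      _ = (r : ℝ) * (K₁ * X * J₁ + K₂ * D * J₂) := by
          rw [Finset.sum_const, Finset.card_univ, Fintype.card_fin, nsmul_eq_mul]
      _ = K₁ * X * ((r : ℝ) * J₁) + K₂ * D * ((r : ℝ) * J₂) := by ring
  -- put everything together
  have hfinal1 : ((N : ℝ) + 1) * K₁ * K₁ * (r : ℝ) ≤ ((N : ℝ) + 1) * K₁ * (K₁ + K₂) * (r : ℝ) := by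
    have h1 : K₁ ≤ K₁ + K₂ := by linarith
    have h2 : (0 : ℝ) ≤ ((N : ℝ) + 1) * K₁ := mul_nonneg (by positivity) (by linarith)
    exact mul_le_mul_of_nonneg_right (mul_le_mul_of_nonneg_left h1 h2) (Nat.cast_nonneg r)
  have hfinal2 : ((N : ℝ) + 1) * K₁ * K₂ * (r : ℝ) ≤ ((N : ℝ) + 1) * K₁ * (K₁ + K₂) * (r : ℝ) := by
    have h1 : K₂ ≤ K₁ + K₂ := by linarith
    have h2 : (0 : ℝ) ≤ ((N : ℝ) + 1) * K₁ := mul_nonneg (by positivity) (by linarith)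
    exact mul_le_mul_of_nonneg_right (mul_le_mul_of_nonneg_left h1 h2) (Nat.cast_nonneg r)
  calc (∑ i, |x i - xα i| ^ p) ^ (1 / p)
      ≤ ((N : ℝ) + 1) * (K₁ * S) := hLHS
    _ ≤ ((N : ℝ) + 1) * (K₁ * (K₁ * X * ((r : ℝ) * J₁) + K₂ * D * ((r : ℝ) * J₂))) := by
        refine mul_le_mul_of_nonneg_left (mul_le_mul_of_nonneg_left hS (by linarith)) (by positivity)
    _ = ((N : ℝ) + 1) * K₁ * K₁ * (r : ℝ) * (X * J₁)
        + ((N : ℝ) + 1) * K₁ * K₂ * (r : ℝ) * (D * J₂) := by ring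
    _ ≤ ((N : ℝ) + 1) * K₁ * (K₁ + K₂) * (r : ℝ) * (X * J₁)
        + ((N : ℝ) + 1) * K₁ * (K₁ + K₂) * (r : ℝ) * (D * J₂) :=
        add_le_add (mul_le_mul_of_nonneg_right hfinal1 (mul_nonneg hXnn hJ₁nn))
          (mul_le_mul_of_nonneg_right hfinal2 (mul_nonneg hDnn hJ₂nn))
    _ = ((N : ℝ) + 1) * K₁ * (K₁ + K₂) * (r : ℝ) * X * J₁
        + ((N : ℝ) + 1) * K₁ * (K₁ + K₂) * (r : ℝ) * D * J₂ := by ring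
end

section
/- Let A be a real B×N matrix of rank r with singular values σ₁ ≥ … ≥ σ_r in (0,1] and orthonormal singular vectors ξ_j ∈ ℝ^B, ξ̂_j ∈ ℝ^N, and let f : [0,∞) → (0,1] be a continuous strictly decreasing interpolant with f(0)=1, f(j)=σ_j, f(t)→0. Let φ : (0,1]×(0,∞) → ℝ with s ↦ |1−φ(s,α)| and s ↦ |φ(s,α)|/s nonincreasing on (0,1] for the given α > 0. Let p ∈ [1,∞) and let q, q′ > 1 satisfy 1/q + 1/q′ = 1. With b = Σ_j b_j ξ_j, b^δ = Σ_j b_j^δ ξ_j, x = Σ_j (b_j/σ_j) ξ̂_j, x^{α,δ} = Σ_j b_j^δ (φ(σ_j,α)/σ_j) ξ̂_j, there is a constant C₂ depending only on p, q and the singular vectors such that ‖x − x^{α,δ}‖_p ≤ C₂ (Σ_j |b_j/σ_j|^{pq})^{1/(pq)} ( ∫_0^{r+1} |1−φ(f(t),α)|^{pq′} dt )^{1/(pq′)} + C₂ (Σ_j |b_j − b_j^δ|^{pq})^{1/(pq)} ( ∫_0^{r+1} (|φ(f(t),α)|/f(t))^{pq′} dt )^{1/(pq′)}. -/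
open MeasureTheory

lemma aux_integral_lb {H : ℝ → ℝ} {R k : ℝ}
    (hmono : MonotoneOn H (Set.Ici 0)) (hpos : ∀ t, 0 ≤ t → 0 ≤ H t)
    (hk : 0 ≤ k) (hkR : k + 1 ≤ R) :
    H k ≤ ∫ t in (0:ℝ)..R, H t := by
  have hR : (0:ℝ) ≤ R := by linarith
  have hsub : Set.uIcc (0:ℝ) R ⊆ Set.Ici 0 := by
    rw [Set.uIcc_of_le hR]; exact Set.Icc_subset_Ici_self
  have hint : IntervalIntegrable H volume 0 R :=
    (hmono.mono hsub).intervalIntegrable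
  have hint2 : IntervalIntegrable H volume k (k + 1) := by
    refine hint.mono_set ?_
    rw [Set.uIcc_of_le hR, Set.uIcc_of_le (by linarith : k ≤ k + 1)]
    exact Set.Icc_subset_Icc hk hkR
  have h1 : H k ≤ ∫ t in k..(k + 1), H t := by
    have hmain := intervalIntegral.integral_mono_on (f := fun _ => H k) (g := H)
      (by linarith : k ≤ k + 1) intervalIntegrable_const hint2
      (fun x hx => hmono (Set.mem_Ici.2 hk) (Set.mem_Ici.2 (by linarith [hx.1])) hx.1)
    simpa using hmain
  have h2 : (∫ t in k..(k + 1), H t) ≤ ∫ t in (0:ℝ)..R, H t :=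
    intervalIntegral.integral_mono_interval hk (by linarith) hkR
      ((ae_restrict_iff' measurableSet_Ioc).2
        (Filter.Eventually.of_forall fun x hx => hpos x hx.1.le)) hint
  linarith

open Matrix

/-- Hölder-refined error estimate for filtered regularization: for conjugate
exponents `q, q′ > 1`, `1/q + 1/q′ = 1`, there is a constant `C₂` depending only on
`p`, `q` and the singular vectors such that
`‖x − x^{α,δ}‖_p ≤ C₂ (Σ_j |b_j/σ_j|^{pq})^{1/(pq)} (∫_0^{r+1}|1−φ(f(t),α)|^{pq′} dt)^{1/(pq′)}
 + C₂ (Σ_j |b_j − b_j^δ|^{pq})^{1/(pq)} (∫_0^{r+1}(|φ(f(t),α)|/f(t))^{pq′} dt)^{1/(pq′)}`. -/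
theorem stmt_14 {B N r : ℕ} (A : Matrix (Fin B) (Fin N) ℝ) (hrank : A.rank = r)
    (σ : Fin r → ℝ) (hσ : ∀ j, σ j ∈ Set.Ioc (0 : ℝ) 1)
    (hσord : ∀ i j : Fin r, i ≤ j → σ j ≤ σ i)
    (ξ : Fin r → Fin B → ℝ) (ξhat : Fin r → Fin N → ℝ)
    (hξ : ∀ i j, ξ i ⬝ᵥ ξ j = if i = j then 1 else 0)
    (hξhat : ∀ i j, ξhat i ⬝ᵥ ξhat j = if i = j then 1 else 0)
    (hA : ∀ j, A.mulVec (ξhat j) = σ j • ξ j)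
    (hAT : ∀ j, A.transpose.mulVec (ξ j) = σ j • ξhat j)
    (p q q' : ℝ) (hp : 1 ≤ p) (hq : 1 < q) (hq' : 1 < q')
    (hqq' : 1 / q + 1 / q' = 1) :
    ∃ C₂ : ℝ, ∀ f : ℝ → ℝ,
      ContinuousOn f (Set.Ici 0) → StrictAntiOn f (Set.Ici 0) →
      (∀ t : ℝ, 0 ≤ t → f t ∈ Set.Ioc (0 : ℝ) 1) → f 0 = 1 →
      (∀ j : Fin r, f ((j : ℕ) + 1) = σ j) →
      Filter.Tendsto f Filter.atTop (nhds 0) →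
      ∀ (φ : ℝ → ℝ → ℝ) (α : ℝ), 0 < α →
      AntitoneOn (fun s => |1 - φ s α|) (Set.Ioc (0 : ℝ) 1) →
      AntitoneOn (fun s => |φ s α| / s) (Set.Ioc (0 : ℝ) 1) →
      ∀ bc bδ : Fin r → ℝ,
      (∑ i, |(∑ j, (bc j / σ j) • ξhat j) i -
          (∑ j, (bδ j * φ (σ j) α / σ j) • ξhat j) i| ^ p) ^ (1 / p) ≤
        C₂ * (∑ j, |bc j / σ j| ^ (p * q)) ^ (1 / (p * q)) *
            (∫ t in (0 : ℝ)..(r + 1), |1 - φ (f t) α| ^ (p * q')) ^ (1 / (p * q')) +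
          C₂ * (∑ j, |bc j - bδ j| ^ (p * q)) ^ (1 / (p * q)) *
            (∫ t in (0 : ℝ)..(r + 1), (|φ (f t) α| / f t) ^ (p * q')) ^ (1 / (p * q')) := by
  classical
  refine ⟨(N : ℝ) ^ (1 / p) * r, ?_⟩
  intro f hfc hfanti hfmem hf0 hfσ hftop φ α hα hg hh bc bδ
  have hp0 : (0:ℝ) < p := lt_of_lt_of_le one_pos hp
  have hq0 : (0:ℝ) < q := lt_trans one_pos hq
  have hq'0 : (0:ℝ) < q' := lt_trans one_pos hq'
  have hpq : (0:ℝ) < p * q := mul_pos hp0 hq0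
  have hpq' : (0:ℝ) < p * q' := mul_pos hp0 hq'0
  -- abbreviations
  set a : Fin r → ℝ := fun j => bc j / σ j with ha_def
  set c : Fin r → ℝ := fun j => bc j - bδ j with hc_def
  set Anorm : ℝ := (∑ j, |a j| ^ (p * q)) ^ (1 / (p * q)) with hAnorm
  set Cnorm : ℝ := (∑ j, |c j| ^ (p * q)) ^ (1 / (p * q)) with hCnorm
  set Gnorm : ℝ := (∫ t in (0 : ℝ)..(r + 1), |1 - φ (f t) α| ^ (p * q')) ^ (1 / (p * q'))
    with hGnorm
  set Hnorm : ℝ := (∫ t in (0 : ℝ)..(r + 1), (|φ (f t) α| / f t) ^ (p * q')) ^ (1 / (p * q'))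
    with hHnorm
  have hA_nn : 0 ≤ Anorm :=
    Real.rpow_nonneg (Finset.sum_nonneg fun j _ => Real.rpow_nonneg (abs_nonneg _) _) _
  have hC_nn : 0 ≤ Cnorm :=
    Real.rpow_nonneg (Finset.sum_nonneg fun j _ => Real.rpow_nonneg (abs_nonneg _) _) _
  have hG_nn : 0 ≤ Gnorm := Real.rpow_nonneg
    (intervalIntegral.integral_nonneg (by positivity)
      (fun t _ => Real.rpow_nonneg (abs_nonneg _) _)) _
  have hH_nn : 0 ≤ Hnorm := by
    refine Real.rpow_nonneg ?_ _
    refine intervalIntegral.integral_nonneg (by positivity) (fun t ht => ?_)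
    exact Real.rpow_nonneg (div_nonneg (abs_nonneg _) (hfmem t ht.1).1.le) _
  -- per-coefficient bounds by the ℓ^{pq} norms
  have hcoef : ∀ (u : Fin r → ℝ) (j : Fin r),
      |u j| ≤ (∑ k, |u k| ^ (p * q)) ^ (1 / (p * q)) := by
    intro u j
    have h1 : |u j| ^ (p * q) ≤ ∑ k, |u k| ^ (p * q) :=
      Finset.single_le_sum (fun k _ => Real.rpow_nonneg (abs_nonneg _) _) (Finset.mem_univ j)
    calc |u j| = (|u j| ^ (p * q)) ^ (1 / (p * q)) := by
          rw [one_div, Real.rpow_rpow_inv (abs_nonneg _) hpq.ne']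
      _ ≤ (∑ k, |u k| ^ (p * q)) ^ (1 / (p * q)) :=
          Real.rpow_le_rpow (Real.rpow_nonneg (abs_nonneg _) _) h1 (by positivity)
  -- per-index bounds of the filter factors by the integral norms
  have hfle : ∀ s t : ℝ, 0 ≤ s → s ≤ t → f t ≤ f s := by
    intro s t hs hst
    rcases eq_or_lt_of_le hst with h | h
    · exact le_of_eq (by rw [h])
    · exact (hfanti (Set.mem_Ici.2 hs) (Set.mem_Ici.2 (hs.trans hst)) h).le
  have hfilter : ∀ (g0 : ℝ → ℝ), AntitoneOn g0 (Set.Ioc (0:ℝ) 1) →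
      (∀ s, s ∈ Set.Ioc (0:ℝ) 1 → 0 ≤ g0 s) → ∀ j : Fin r,
      g0 (σ j) ≤ (∫ t in (0 : ℝ)..(r + 1), g0 (f t) ^ (p * q')) ^ (1 / (p * q')) := by
    intro g0 hg0 hg0nn j
    set H : ℝ → ℝ := fun t => g0 (f t) ^ (p * q') with hH
    have hmono : MonotoneOn H (Set.Ici 0) := by
      intro t1 h1 t2 h2 hle
      exact Real.rpow_le_rpow (hg0nn _ (hfmem t1 h1))
        (hg0 (hfmem t2 h2) (hfmem t1 h1) (hfle t1 t2 h1 hle)) hpq'.le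
    have hpos : ∀ t, 0 ≤ t → 0 ≤ H t := fun t ht => Real.rpow_nonneg (hg0nn _ (hfmem t ht)) _
    have hjr : ((j : ℕ) : ℝ) + 1 + 1 ≤ (r : ℝ) + 1 := by
      have := j.is_lt
      have : ((j : ℕ) : ℝ) + 1 ≤ (r : ℝ) := by exact_mod_cast Nat.succ_le_of_lt this
      linarith
    have hlb : H (((j : ℕ) : ℝ) + 1) ≤ ∫ t in (0 : ℝ)..(r + 1), H t :=
      aux_integral_lb hmono hpos (by positivity) hjr
    have hHj : H (((j : ℕ) : ℝ) + 1) = g0 (σ j) ^ (p * q') := by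
      rw [hH]; simp only []; rw [hfσ j]
    rw [hHj] at hlb
    calc g0 (σ j) = (g0 (σ j) ^ (p * q')) ^ (1 / (p * q')) := by
          rw [one_div, Real.rpow_rpow_inv (hg0nn _ (hσ j)) hpq'.ne']
      _ ≤ (∫ t in (0 : ℝ)..(r + 1), g0 (f t) ^ (p * q')) ^ (1 / (p * q')) :=
          Real.rpow_le_rpow (Real.rpow_nonneg (hg0nn _ (hσ j)) _) hlb (by positivity)
  have hGj : ∀ j : Fin r, |1 - φ (σ j) α| ≤ Gnorm :=
    hfilter (fun s => |1 - φ s α|) hg (fun s _ => abs_nonneg _)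
  have hHj : ∀ j : Fin r, |φ (σ j) α| / σ j ≤ Hnorm :=
    hfilter (fun s => |φ s α| / s) hh (fun s hs => div_nonneg (abs_nonneg _) hs.1.le)
  -- coefficient decomposition
  set d : Fin r → ℝ := fun j => a j * (1 - φ (σ j) α) + c j * (φ (σ j) α / σ j) with hd_def
  have hσne : ∀ j : Fin r, σ j ≠ 0 := fun j => (hσ j).1.ne'
  have hdj : ∀ j : Fin r, bc j / σ j - bδ j * φ (σ j) α / σ j = d j := by
    intro j
    rw [hd_def]
    simp only [ha_def, hc_def]
    field_simp
    ring
  have hd_le : ∀ j : Fin r, |d j| ≤ Anorm * Gnorm + Cnorm * Hnorm := by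
    intro j
    have e : |φ (σ j) α / σ j| = |φ (σ j) α| / σ j := by
      rw [abs_div, abs_of_pos (hσ j).1]
    have h1 : |d j| ≤ |a j| * |1 - φ (σ j) α| + |c j| * (|φ (σ j) α| / σ j) := by
      refine (abs_add_le _ _).trans ?_
      rw [abs_mul, abs_mul, e]
    refine h1.trans (add_le_add ?_ ?_)
    · exact mul_le_mul (hcoef a j) (hGj j) (abs_nonneg _) hA_nn
    · exact mul_le_mul (hcoef c j) (hHj j) (div_nonneg (abs_nonneg _) (hσ j).1.le) hC_nn
  -- vector entries
  set S : ℝ := ∑ j, |d j| with hS_def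
  have hS_nn : 0 ≤ S := Finset.sum_nonneg fun j _ => abs_nonneg _
  have hξ1 : ∀ (j : Fin r) (i : Fin N), |ξhat j i| ≤ 1 := by
    intro j i
    have hdot : ∑ k, ξhat j k * ξhat j k = 1 := by
      simpa [dotProduct] using hξhat j j
    have h1 : ξhat j i * ξhat j i ≤ 1 := by
      rw [← hdot]
      exact Finset.single_le_sum (fun k _ => mul_self_nonneg (ξhat j k)) (Finset.mem_univ i)
    exact abs_le_one_iff_mul_self_le_one.2 h1
  have hv : ∀ i : Fin N,
      |(∑ j, (bc j / σ j) • ξhat j) i - (∑ j, (bδ j * φ (σ j) α / σ j) • ξhat j) i| ≤ S := by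
    intro i
    have hvi : (∑ j, (bc j / σ j) • ξhat j) i - (∑ j, (bδ j * φ (σ j) α / σ j) • ξhat j) i
        = ∑ j, d j * ξhat j i := by
      simp only [Finset.sum_apply, Pi.smul_apply, smul_eq_mul, ← Finset.sum_sub_distrib]
      refine Finset.sum_congr rfl fun j _ => ?_
      rw [← hdj j]; ring
    rw [hvi]
    calc |∑ j, d j * ξhat j i| ≤ ∑ j, |d j * ξhat j i| := Finset.abs_sum_le_sum_abs _ _
      _ ≤ ∑ j, |d j| := by
          refine Finset.sum_le_sum fun j _ => ?_
          rw [abs_mul]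
          calc |d j| * |ξhat j i| ≤ |d j| * 1 :=
                mul_le_mul_of_nonneg_left (hξ1 j i) (abs_nonneg _)
            _ = |d j| := mul_one _
  -- p-norm bound
  have hsum_le : (∑ i, |(∑ j, (bc j / σ j) • ξhat j) i -
      (∑ j, (bδ j * φ (σ j) α / σ j) • ξhat j) i| ^ p) ^ (1 / p) ≤ (N : ℝ) ^ (1 / p) * S := by
    have h1 : (∑ i : Fin N, |(∑ j, (bc j / σ j) • ξhat j) i -
        (∑ j, (bδ j * φ (σ j) α / σ j) • ξhat j) i| ^ p) ≤ (N : ℝ) * S ^ p := by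
      calc (∑ i : Fin N, |(∑ j, (bc j / σ j) • ξhat j) i -
            (∑ j, (bδ j * φ (σ j) α / σ j) • ξhat j) i| ^ p)
          ≤ ∑ _i : Fin N, S ^ p := by
            refine Finset.sum_le_sum fun i _ => ?_
            exact Real.rpow_le_rpow (abs_nonneg _) (hv i) hp0.le
        _ = (N : ℝ) * S ^ p := by
            rw [Finset.sum_const, Finset.card_univ, Fintype.card_fin, nsmul_eq_mul]
    calc (∑ i, |(∑ j, (bc j / σ j) • ξhat j) i -
          (∑ j, (bδ j * φ (σ j) α / σ j) • ξhat j) i| ^ p) ^ (1 / p)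
        ≤ ((N : ℝ) * S ^ p) ^ (1 / p) :=
          Real.rpow_le_rpow (Finset.sum_nonneg fun i _ => Real.rpow_nonneg (abs_nonneg _) _)
            h1 (by positivity)
      _ = (N : ℝ) ^ (1 / p) * S := by
          rw [Real.mul_rpow (Nat.cast_nonneg N) (Real.rpow_nonneg hS_nn _),
            one_div, Real.rpow_rpow_inv hS_nn hp0.ne']
  have hS_le : S ≤ (r : ℝ) * (Anorm * Gnorm + Cnorm * Hnorm) := by
    calc S ≤ ∑ _j : Fin r, (Anorm * Gnorm + Cnorm * Hnorm) :=
        Finset.sum_le_sum fun j _ => hd_le j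
      _ = (r : ℝ) * (Anorm * Gnorm + Cnorm * Hnorm) := by
        rw [Finset.sum_const, Finset.card_univ, Fintype.card_fin, nsmul_eq_mul]
  have hNp : (0:ℝ) ≤ (N : ℝ) ^ (1 / p) := Real.rpow_nonneg (Nat.cast_nonneg N) _
  calc (∑ i, |(∑ j, (bc j / σ j) • ξhat j) i -
        (∑ j, (bδ j * φ (σ j) α / σ j) • ξhat j) i| ^ p) ^ (1 / p)
      ≤ (N : ℝ) ^ (1 / p) * S := hsum_le
    _ ≤ (N : ℝ) ^ (1 / p) * ((r : ℝ) * (Anorm * Gnorm + Cnorm * Hnorm)) :=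
        mul_le_mul_of_nonneg_left hS_le hNp
    _ = (N : ℝ) ^ (1 / p) * r * Anorm * Gnorm + (N : ℝ) ^ (1 / p) * r * Cnorm * Hnorm := by
        ring
end

section
/- Let ψ : ℝ → ℝ be continuously differentiable, let q₁,…,q_N ∈ ℝ, and let (f_{ij})_{1≤i,j≤N} be real numbers with f_{ij} = −f_{ji} (so f_{ii}=0). Define T(x) = Σ_{1≤i<j≤N} f_{ij} (q_j − q_i) ∫_0^1 ψ( s(x − q_j) + (1−s)(x − q_i) ) ds. Then T is differentiable and T′(x) = Σ_{i=1}^N ( Σ_{j≠i} f_{ij} ) ψ(x − q_i) for all x ∈ ℝ. -/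
/-- One-dimensional Hardy–Murdoch interaction stress identity: for antisymmetric
interaction forces `f i j = −f j i` and `T(x) = Σ_{i<j} f i j (q j − q i)
∫_0^1 ψ(s(x − q j) + (1−s)(x − q i)) ds`, the function `T` is differentiable with
`T'(x) = Σ_i (Σ_{j≠i} f i j) ψ(x − q i)`. -/
theorem stmt_17 (N : ℕ) (ψ : ℝ → ℝ) (hψ : ContDiff ℝ 1 ψ)
    (q : Fin N → ℝ) (f : Fin N → Fin N → ℝ)
    (hf : ∀ i j, f i j = -f j i) :
    ∀ x : ℝ,
      HasDerivAt
        (fun x : ℝ => ∑ i, ∑ j,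
          if i < j then
            f i j * (q j - q i) *
              ∫ s in (0 : ℝ)..1, ψ (s * (x - q j) + (1 - s) * (x - q i))
          else 0)
        (∑ i, (∑ j ∈ Finset.univ.erase i, f i j) * ψ (x - q i)) x := by
  intro x
  have ψc : Continuous ψ := hψ.continuous
  have hfii : ∀ i, f i i = 0 := fun i => by have := hf i i; linarith
  -- substitution identity: (b−a) ∫_0^1 ψ(s(x−b)+(1−s)(x−a)) ds = ∫_{x−b}^{x−a} ψ
  have hident : ∀ a b y : ℝ,
      (b - a) * ∫ s in (0:ℝ)..1, ψ (s * (y - b) + (1 - s) * (y - a))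
        = ∫ t in (y - b)..(y - a), ψ t := by
    intro a b y
    rcases eq_or_ne a b with h | h
    · subst h; simp
    · have harg : ∀ s : ℝ, s * (y - b) + (1 - s) * (y - a) = (a - b) * s + (y - a) := by
        intro s; ring
      simp only [harg]
      rw [intervalIntegral.integral_comp_mul_add ψ (sub_ne_zero.mpr h) (y - a)]
      have h1 : (a - b) * 0 + (y - a) = y - a := by ring
      have h2 : (a - b) * 1 + (y - a) = y - b := by ring
      rw [h1, h2, smul_eq_mul, intervalIntegral.integral_symm]
      have hab : a - b ≠ 0 := sub_ne_zero.mpr h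
      field_simp
      ring
  -- FTC derivative
  have hderiv : ∀ a : ℝ,
      HasDerivAt (fun y : ℝ => ∫ t in (0:ℝ)..(y - a), ψ t) (ψ (x - a)) x := by
    intro a
    have h1 : HasDerivAt (fun u : ℝ => ∫ t in (0:ℝ)..u, ψ t) (ψ (x - a)) (x - a) :=
      intervalIntegral.integral_hasDerivAt_right (ψc.intervalIntegrable _ _)
        (ψc.stronglyMeasurable.stronglyMeasurableAtFilter) ψc.continuousAt
    have h2 : HasDerivAt (fun y : ℝ => y - a) 1 x := (hasDerivAt_id x).sub_const a
    have h3 := h1.comp x h2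
    rw [mul_one] at h3
    exact h3
  -- per-term derivative
  have hterm : ∀ i j : Fin N,
      HasDerivAt
        (fun y : ℝ => if i < j then
            f i j * (q j - q i) *
              ∫ s in (0 : ℝ)..1, ψ (s * (y - q j) + (1 - s) * (y - q i))
          else 0)
        (if i < j then f i j * (ψ (x - q i) - ψ (x - q j)) else 0) x := by
    intro i j
    by_cases hij : i < j
    · simp only [if_pos hij]
      have heq : (fun y : ℝ =>
          f i j * (q j - q i) *
            ∫ s in (0 : ℝ)..1, ψ (s * (y - q j) + (1 - s) * (y - q i)))
          = fun y : ℝ => f i j *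
              ((∫ t in (0:ℝ)..(y - q i), ψ t) - ∫ t in (0:ℝ)..(y - q j), ψ t) := by
        funext y
        rw [mul_assoc, hident (q i) (q j) y,
          intervalIntegral.integral_interval_sub_left (ψc.intervalIntegrable _ _)
            (ψc.intervalIntegrable _ _)]
      rw [heq]
      exact ((hderiv (q i)).sub (hderiv (q j))).const_mul (f i j)
    · simp only [if_neg hij]
      exact hasDerivAt_const x 0
  have hsum : HasDerivAt
      (fun y : ℝ => ∑ i, ∑ j,
        if i < j then
          f i j * (q j - q i) *
            ∫ s in (0 : ℝ)..1, ψ (s * (y - q j) + (1 - s) * (y - q i))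
        else 0)
      (∑ i, ∑ j, if i < j then f i j * (ψ (x - q i) - ψ (x - q j)) else 0) x := by
    apply HasDerivAt.fun_sum
    intro i _
    apply HasDerivAt.fun_sum
    intro j _
    exact hterm i j
  -- algebraic identity
  have halg : (∑ i, ∑ j, if i < j then f i j * (ψ (x - q i) - ψ (x - q j)) else 0)
      = ∑ i, (∑ j ∈ Finset.univ.erase i, f i j) * ψ (x - q i) := by
    have step1 : (∑ i, ∑ j, if i < j then f i j * (ψ (x - q i) - ψ (x - q j)) else 0)
        = (∑ i, ∑ j, if i < j then f i j * ψ (x - q i) else 0)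
          - ∑ i, ∑ j, if i < j then f i j * ψ (x - q j) else 0 := by
      rw [← Finset.sum_sub_distrib]
      refine Finset.sum_congr rfl fun i _ => ?_
      rw [← Finset.sum_sub_distrib]
      refine Finset.sum_congr rfl fun j _ => ?_
      split_ifs <;> ring
    have step2 : (∑ i, ∑ j, if i < j then f i j * ψ (x - q j) else 0)
        = ∑ i : Fin N, ∑ j : Fin N, if j < i then f j i * ψ (x - q i) else 0 :=
      Finset.sum_comm
    rw [step1, step2, ← Finset.sum_sub_distrib]
    have rhs : ∀ i : Fin N, (∑ j ∈ Finset.univ.erase i, f i j) * ψ (x - q i)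
        = ∑ j : Fin N, f i j * ψ (x - q i) := by
      intro i
      rw [Finset.sum_mul, Finset.sum_erase_eq_sub (Finset.mem_univ i)]
      simp [hfii]
    refine Finset.sum_congr rfl fun i _ => ?_
    rw [rhs i, ← Finset.sum_sub_distrib]
    refine Finset.sum_congr rfl fun j _ => ?_
    rcases lt_trichotomy i j with h | h | h
    · simp [h, not_lt_of_gt h]
    · subst h; simp [hfii]
    · simp only [if_neg (not_lt_of_gt h), if_pos h, hf j i]
      ring
  rw [← halg]
  exact hsum
end
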